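/- Let α > 0, δ ∈ (0, α), set ω = (α − δ)/2, and let g : (0,∞) → ℝ have g' ≤ 0 satisfying −g'(s + t) ≤ −g'(s) e^{(α−δ)t} for all s > 0, t ≥ 0. Let E be a real Hilbert space and η : (0,∞) → E locally absolutely continuous with η(s) → 0 as s → 0⁺ and ∫₀^∞ −g'(y) ‖η'(y)‖² dy < ∞. Then for every t > 0, (1/t²) ∫₀^t −g'(s) ‖η(s)‖² ds ≤ e^{2ωt} ∫₀^t −g'(y) ‖η'(y)‖² dy; in particular (1/t²) ∫₀^t −g'(s) ‖η(s)‖² ds → 0 as t → 0⁺. -/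

import Mathlib

open MeasureTheory Filter Topology

/-- with `ω = (α-δ)/2`, the piece of the difference quotient of the
right-translation semigroup satisfies
`(1/t²) ∫₀^t -g'(s) ‖η(s)‖² ds ≤ e^{2ωt} ∫₀^t -g'(y) ‖η'(y)‖² dy`, and tends to `0`
as `t → 0⁺`. -/
lemma my_cs {E : Type*} [NormedAddCommGroup E] {f : ℝ → E} {a b : ℝ} (hab : a ≤ b)
    (hmeas : AEStronglyMeasurable f (volume.restrict (Set.Ioo a b)))
    (hsq : IntegrableOn (fun y => ‖f y‖ ^ 2) (Set.Ioo a b)) :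
    (∫ y in Set.Ioo a b, ‖f y‖) ^ 2 ≤ (b - a) * ∫ y in Set.Ioo a b, ‖f y‖ ^ 2 := by
  set μ := volume.restrict (Set.Ioo a b) with hμ
  haveI : IsFiniteMeasure μ := ⟨by
    rw [hμ, Measure.restrict_apply_univ]; exact measure_Ioo_lt_top⟩
  have h2 : (ENNReal.ofReal (2:ℝ)) = 2 := by norm_num
  have hf2 : MemLp f (ENNReal.ofReal 2) μ := by
    rw [h2]; exact (memLp_two_iff_integrable_sq_norm hmeas).2 hsq
  have hg2 : MemLp (fun _ : ℝ => (1:ℝ)) (ENNReal.ofReal 2) μ := memLp_const 1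
  have h := integral_mul_norm_le_Lp_mul_Lq (μ := μ) (p := 2) (q := 2)
    ⟨by norm_num, by norm_num, by norm_num⟩ hf2.norm hg2
  simp only [norm_one, mul_one, norm_norm] at h
  have hA : (0:ℝ) ≤ ∫ y, ‖f y‖ ^ 2 ∂μ := integral_nonneg fun y => sq_nonneg _
  have hrw : ∀ x : E, ‖x‖ ^ (2:ℝ) = ‖x‖ ^ 2 := fun x => Real.rpow_two _
  rw [show (fun y => ‖f y‖ ^ (2:ℝ)) = fun y => ‖f y‖ ^ 2 from funext fun y => hrw _] at h
  have hone : ∫ _y, (1:ℝ) ^ (2:ℝ) ∂μ = b - a := by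
    simp [hμ, Real.volume_Ioo, ENNReal.toReal_ofReal (sub_nonneg.2 hab), hab]
  rw [hone] at h
  have hL : (0:ℝ) ≤ ∫ y, ‖f y‖ ∂μ := integral_nonneg fun y => norm_nonneg _
  calc (∫ y, ‖f y‖ ∂μ) ^ 2
      ≤ ((∫ y, ‖f y‖ ^ 2 ∂μ) ^ ((1:ℝ)/2) * (b - a) ^ ((1:ℝ)/2)) ^ 2 :=
        pow_le_pow_left₀ hL h 2
    _ = (b - a) * ∫ y, ‖f y‖ ^ 2 ∂μ := by
        rw [mul_pow, ← Real.rpow_natCast ((∫ y, ‖f y‖ ^ 2 ∂μ) ^ ((1:ℝ)/2)) 2,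
          ← Real.rpow_natCast ((b - a) ^ ((1:ℝ)/2)) 2,
          ← Real.rpow_mul hA, ← Real.rpow_mul (sub_nonneg.2 hab)]
        norm_num [mul_comm]


theorem mgt_difference_quotient_piece
    {E : Type*} [NormedAddCommGroup E] [InnerProductSpace ℝ E] [CompleteSpace E]
    (α δ : ℝ) (hδ : 0 < δ) (hδα : δ < α)
    (g' : ℝ → ℝ)
    (hg'_nonpos : ∀ s ∈ Set.Ioi (0 : ℝ), g' s ≤ 0)
    (hexp : ∀ s ∈ Set.Ioi (0 : ℝ), ∀ t : ℝ, 0 ≤ t →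
      -g' (s + t) ≤ -g' s * Real.exp ((α - δ) * t))
    (η η' : ℝ → E)
    (hη'loc : ∀ ν : ℝ, 0 < ν → IntervalIntegrable η' MeasureTheory.volume 0 ν)
    (hrepr : ∀ s : ℝ, 0 < s → η s = ∫ y in (0 : ℝ)..s, η' y)
    (hη'_int : IntegrableOn (fun y => -g' y * ‖η' y‖ ^ 2) (Set.Ioi 0)) :
    (∀ t : ℝ, 0 < t →
      (1 / t ^ 2) * ∫ s in Set.Ioo (0 : ℝ) t, -g' s * ‖η s‖ ^ 2
        ≤ Real.exp (2 * ((α - δ) / 2) * t) * ∫ y in Set.Ioo (0 : ℝ) t, -g' y * ‖η' y‖ ^ 2) ∧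
    Tendsto (fun t => (1 / t ^ 2) * ∫ s in Set.Ioo (0 : ℝ) t, -g' s * ‖η s‖ ^ 2)
      (nhdsWithin 0 (Set.Ioi 0)) (nhds 0) := by
  have hαδ : 0 < α - δ := sub_pos.mpr hδα
  have main : ∀ t : ℝ, 0 < t →
      (1 / t ^ 2) * ∫ s in Set.Ioo (0 : ℝ) t, -g' s * ‖η s‖ ^ 2
        ≤ Real.exp (2 * ((α - δ) / 2) * t) * ∫ y in Set.Ioo (0 : ℝ) t, -g' y * ‖η' y‖ ^ 2 := by
    intro t ht
    have hexp_eq : 2 * ((α - δ) / 2) * t = (α - δ) * t := by ring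
    rw [hexp_eq]
    set ed := Real.exp ((α - δ) * t) with hed
    have hed_pos : 0 < ed := Real.exp_pos _
    set I := ∫ y in Set.Ioo (0 : ℝ) t, -g' y * ‖η' y‖ ^ 2 with hIdef
    have hInn : 0 ≤ I := setIntegral_nonneg measurableSet_Ioo fun y hy =>
      mul_nonneg (neg_nonneg.2 (hg'_nonpos y hy.1)) (sq_nonneg _)
    have hIt : IntegrableOn (fun y => -g' y * ‖η' y‖ ^ 2) (Set.Ioo 0 t) :=
      hη'_int.mono_set Set.Ioo_subset_Ioi_self
    -- pointwise bound
    have hpt : ∀ s ∈ Set.Ioo (0:ℝ) t, -g' s * ‖η s‖ ^ 2 ≤ t * (ed * I) := by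
      intro s hs
      obtain ⟨hs0, hst⟩ := hs
      rcases eq_or_lt_of_le (hg'_nonpos s hs0) with h0 | hneg
      · rw [h0]
        simp only [neg_zero, zero_mul]
        positivity
      · have hG : 0 < -g' s := neg_pos.2 hneg
        -- lower bound on -g' on (0, s)
        set c := -g' s / Real.exp ((α - δ) * s) with hc
        have hc_pos : 0 < c := div_pos hG (Real.exp_pos _)
        have hlow : ∀ y ∈ Set.Ioo (0:ℝ) s, c ≤ -g' y := by
          intro y hy
          have h1 : -g' (y + (s - y)) ≤ -g' y * Real.exp ((α - δ) * (s - y)) :=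
            hexp y hy.1 (s - y) (by linarith [hy.2])
          rw [show y + (s - y) = s by ring] at h1
          have h2 : Real.exp ((α - δ) * (s - y)) ≤ Real.exp ((α - δ) * s) :=
            Real.exp_le_exp.2 (by nlinarith [hy.1, hy.2])
          have hgy : 0 ≤ -g' y := neg_nonneg.2 (hg'_nonpos y hy.1)
          rw [hc, div_le_iff₀ (Real.exp_pos _)]
          calc -g' s ≤ -g' y * Real.exp ((α - δ) * (s - y)) := h1
            _ ≤ -g' y * Real.exp ((α - δ) * s) := by
                exact mul_le_mul_of_nonneg_left h2 hgy
        -- integrability of the squared norm on (0, s)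
        have hη'meas : AEStronglyMeasurable η' (volume.restrict (Set.Ioo 0 s)) :=
          ((hη'loc s hs0).1.aestronglyMeasurable).mono_measure
            (Measure.restrict_mono Set.Ioo_subset_Ioc_self le_rfl)
        have hsqmeas : AEStronglyMeasurable (fun y => ‖η' y‖ ^ 2)
            (volume.restrict (Set.Ioo 0 s)) :=
          (hη'meas.norm.aemeasurable.pow_const 2).aestronglyMeasurable
        have hIs : IntegrableOn (fun y => -g' y * ‖η' y‖ ^ 2) (Set.Ioo 0 s) :=
          hIt.mono_set (Set.Ioo_subset_Ioo le_rfl hst.le)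
        have hsq : IntegrableOn (fun y => ‖η' y‖ ^ 2) (Set.Ioo 0 s) := by
          refine Integrable.mono' (hIs.const_mul (1/c)) hsqmeas ?_
          refine (ae_restrict_iff' measurableSet_Ioo).2 (ae_of_all _ fun y hy => ?_)
          have hgy : 0 ≤ -g' y := neg_nonneg.2 (hg'_nonpos y hy.1)
          rw [Real.norm_of_nonneg (sq_nonneg _)]
          rw [one_div, mul_comm, ← div_eq_mul_inv, le_div_iff₀ hc_pos]
          calc ‖η' y‖ ^ 2 * c ≤ ‖η' y‖ ^ 2 * -g' y :=
                mul_le_mul_of_nonneg_left (hlow y hy) (sq_nonneg _)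
            _ = -g' y * ‖η' y‖ ^ 2 := mul_comm _ _
        -- Cauchy–Schwarz
        have hηs : ‖η s‖ ≤ ∫ y in Set.Ioo (0:ℝ) s, ‖η' y‖ := by
          rw [hrepr s hs0, intervalIntegral.integral_of_le hs0.le,
            ← MeasureTheory.integral_Ioc_eq_integral_Ioo (f := fun y => ‖η' y‖)]
          exact norm_integral_le_integral_norm _
        have hcs : ‖η s‖ ^ 2 ≤ s * ∫ y in Set.Ioo (0:ℝ) s, ‖η' y‖ ^ 2 := by
          have h1 : ‖η s‖ ^ 2 ≤ (∫ y in Set.Ioo (0:ℝ) s, ‖η' y‖) ^ 2 := by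
            have hnn : 0 ≤ ∫ y in Set.Ioo (0:ℝ) s, ‖η' y‖ :=
              setIntegral_nonneg measurableSet_Ioo fun y _ => norm_nonneg _
            exact pow_le_pow_left₀ (norm_nonneg _) hηs 2
          refine h1.trans ?_
          have := my_cs (f := η') hs0.le hη'meas hsq
          simpa using this
        -- weighted estimate
        have hkey : -g' s * ∫ y in Set.Ioo (0:ℝ) s, ‖η' y‖ ^ 2 ≤ ed * I := by
          rw [← MeasureTheory.integral_const_mul]
          have step1 : ∫ y in Set.Ioo (0:ℝ) s, -g' s * ‖η' y‖ ^ 2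
              ≤ ∫ y in Set.Ioo (0:ℝ) s, ed * (-g' y * ‖η' y‖ ^ 2) := by
            refine setIntegral_mono_on (hsq.const_mul _) (hIs.const_mul _)
              measurableSet_Ioo fun y hy => ?_
            have h1 : -g' (y + (s - y)) ≤ -g' y * Real.exp ((α - δ) * (s - y)) :=
              hexp y hy.1 (s - y) (by linarith [hy.2])
            rw [show y + (s - y) = s by ring] at h1
            have h2 : Real.exp ((α - δ) * (s - y)) ≤ ed := by
              rw [hed]; exact Real.exp_le_exp.2 (by nlinarith [hy.1, hy.2, hst])
            have hgy : 0 ≤ -g' y := neg_nonneg.2 (hg'_nonpos y hy.1)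
            have : -g' s ≤ ed * -g' y := by
              calc -g' s ≤ -g' y * Real.exp ((α - δ) * (s - y)) := h1
                _ ≤ -g' y * ed := mul_le_mul_of_nonneg_left h2 hgy
                _ = ed * -g' y := mul_comm _ _
            calc -g' s * ‖η' y‖ ^ 2 ≤ (ed * -g' y) * ‖η' y‖ ^ 2 :=
                  mul_le_mul_of_nonneg_right this (sq_nonneg _)
              _ = ed * (-g' y * ‖η' y‖ ^ 2) := by ring
          refine step1.trans ?_
          rw [MeasureTheory.integral_const_mul, hIdef]
          refine mul_le_mul_of_nonneg_left ?_ hed_pos.le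
          refine setIntegral_mono_set hIt ?_ ?_
          · refine (ae_restrict_iff' measurableSet_Ioo).2 (ae_of_all _ fun y hy => ?_)
            exact mul_nonneg (neg_nonneg.2 (hg'_nonpos y hy.1)) (sq_nonneg _)
          · exact HasSubset.Subset.eventuallyLE (Set.Ioo_subset_Ioo le_rfl hst.le)
        calc -g' s * ‖η s‖ ^ 2
            ≤ -g' s * (s * ∫ y in Set.Ioo (0:ℝ) s, ‖η' y‖ ^ 2) :=
              mul_le_mul_of_nonneg_left hcs hG.le
          _ = s * (-g' s * ∫ y in Set.Ioo (0:ℝ) s, ‖η' y‖ ^ 2) := by ring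
          _ ≤ s * (ed * I) := mul_le_mul_of_nonneg_left hkey hs0.le
          _ ≤ t * (ed * I) := by
              exact mul_le_mul_of_nonneg_right hst.le (by positivity)
    -- integrate the pointwise bound
    have htot : (∫ s in Set.Ioo (0:ℝ) t, -g' s * ‖η s‖ ^ 2) ≤ t * (t * (ed * I)) := by
      have h1 : (∫ s in Set.Ioo (0:ℝ) t, -g' s * ‖η s‖ ^ 2)
          ≤ ∫ _s in Set.Ioo (0:ℝ) t, t * (ed * I) := by
        refine integral_mono_of_nonneg ?_ (integrableOn_const measure_Ioo_lt_top.ne) ?_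
        · refine (ae_restrict_iff' measurableSet_Ioo).2 (ae_of_all _ fun s hs => ?_)
          exact mul_nonneg (neg_nonneg.2 (hg'_nonpos s hs.1)) (sq_nonneg _)
        · exact (ae_restrict_iff' measurableSet_Ioo).2 (ae_of_all _ hpt)
      refine h1.trans_eq ?_
      rw [setIntegral_const, smul_eq_mul, Real.volume_real_Ioo_of_le ht.le]
      ring_nf
    have ht2 : (0:ℝ) < t ^ 2 := by positivity
    calc (1 / t ^ 2) * ∫ s in Set.Ioo (0:ℝ) t, -g' s * ‖η s‖ ^ 2
        ≤ (1 / t ^ 2) * (t * (t * (ed * I))) :=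
          mul_le_mul_of_nonneg_left htot (by positivity)
      _ = ed * I := by field_simp
  refine ⟨main, ?_⟩
  -- the limit
  have hIlim : Tendsto (fun t => ∫ y in Set.Ioo (0:ℝ) t, -g' y * ‖η' y‖ ^ 2)
      (nhdsWithin 0 (Set.Ioi 0)) (nhds 0) := by
    set H := (Set.Ioi (0:ℝ)).indicator (fun y => -g' y * ‖η' y‖ ^ 2) with hH
    have hHint : Integrable H := (integrable_indicator_iff measurableSet_Ioi).2 hη'_int
    have hrw : ∀ t : ℝ, 0 < t → (∫ y in Set.Ioo (0:ℝ) t, -g' y * ‖η' y‖ ^ 2)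
        = ∫ y, (Set.Ioo (0:ℝ) t).indicator H y := by
      intro t ht
      rw [integral_indicator measurableSet_Ioo]
      refine setIntegral_congr_fun measurableSet_Ioo fun y hy => ?_
      rw [hH, Set.indicator_of_mem (Set.Ioo_subset_Ioi_self hy)]
    have hlim : Tendsto (fun t => ∫ y, (Set.Ioo (0:ℝ) t).indicator H y)
        (nhdsWithin 0 (Set.Ioi 0)) (nhds 0) := by
      have := tendsto_integral_filter_of_dominated_convergence (μ := volume)
        (F := fun t => (Set.Ioo (0:ℝ) t).indicator H) (f := fun _ => (0:ℝ))
        (l := nhdsWithin 0 (Set.Ioi 0)) (fun y => ‖H y‖)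
        (Eventually.of_forall fun t => hHint.aestronglyMeasurable.indicator measurableSet_Ioo)
        (Eventually.of_forall fun t => ae_of_all _ fun y => norm_indicator_le_norm_self _ _)
        hHint.norm
        (ae_of_all _ fun y => ?_)
      · simpa using this
      · rcases le_or_gt y 0 with hy | hy
        · refine Tendsto.congr' (Eventually.of_forall fun t => ?_) tendsto_const_nhds
          exact (Set.indicator_of_notMem
            (fun h : y ∈ Set.Ioo (0:ℝ) t => absurd h.1 (not_lt.2 hy)) H).symm
        · refine Tendsto.congr' ?_ tendsto_const_nhds
          filter_upwards [Ioo_mem_nhdsGT_of_mem (Set.left_mem_Ico.2 hy)] with t ht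
          exact (Set.indicator_of_notMem
            (fun h : y ∈ Set.Ioo (0:ℝ) t => absurd h.2 (not_lt.2 ht.2.le)) H).symm
    refine hlim.congr' ?_
    filter_upwards [self_mem_nhdsWithin] with t ht
    exact (hrw t ht).symm
  have hUlim : Tendsto (fun t => Real.exp (2 * ((α - δ) / 2) * t) *
      ∫ y in Set.Ioo (0:ℝ) t, -g' y * ‖η' y‖ ^ 2)
      (nhdsWithin 0 (Set.Ioi 0)) (nhds 0) := by
    have h1 : Tendsto (fun t : ℝ => Real.exp (2 * ((α - δ) / 2) * t))
        (nhdsWithin 0 (Set.Ioi 0)) (nhds 1) := by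
      have : Continuous fun t : ℝ => Real.exp (2 * ((α - δ) / 2) * t) :=
        Real.continuous_exp.comp (continuous_const.mul continuous_id)
      have h2 : Tendsto (fun t : ℝ => Real.exp (2 * ((α - δ) / 2) * t))
          (nhdsWithin 0 (Set.Ioi 0)) (nhds (Real.exp (2 * ((α - δ) / 2) * 0))) :=
        (this.tendsto 0).mono_left nhdsWithin_le_nhds
      simpa using h2
    simpa using h1.mul hIlim
  refine tendsto_of_tendsto_of_tendsto_of_le_of_le' tendsto_const_nhds hUlim ?_ ?_
  · filter_upwards [self_mem_nhdsWithin] with t ht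
    refine mul_nonneg (by positivity) ?_
    exact setIntegral_nonneg measurableSet_Ioo fun s hs =>
      mul_nonneg (neg_nonneg.2 (hg'_nonpos s hs.1)) (sq_nonneg _)
  · filter_upwards [self_mem_nhdsWithin] with t ht
    exact main t ht
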